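/- Let Δ > −1 be a random variable with E[(1+Δ)^{-1}] < ∞ and E[Δ⁶] < ∞. Then |E[∫₀^Δ x²/(1+x) dx]| ≤ (E[(1+Δ)^{-1}])^{1/2} · (E[Δ⁶]/5)^{1/2}. -/

import Mathlib

open MeasureTheory

theorem csIoc (a b : ℝ) (ha : -1 < a) (hab : a ≤ b) :
    ∫ x in Set.Ioc a b, x^2/(1+x) ≤
      Real.sqrt ((∫ x in Set.Ioc a b, ((1+x)⁻¹)^2) * (∫ x in Set.Ioc a b, (x^2)^2)) := by
  set ν := volume.restrict (Set.Ioc a b) with hν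
  haveI : IsFiniteMeasure ν := by
    constructor
    rw [hν, Measure.restrict_apply_univ, Real.volume_Ioc]
    exact ENNReal.ofReal_lt_top
  have hmemf : MemLp (fun x => (1+x)⁻¹) 2 ν := by
    have hsm : AEStronglyMeasurable (fun x : ℝ => (1+x)⁻¹) ν :=
      ((measurable_const.add measurable_id).inv).aestronglyMeasurable
    refine (memLp_top_of_bound hsm ((1+a)⁻¹) ?_).mono_exponent le_top
    rw [hν, ae_restrict_iff' measurableSet_Ioc]
    filter_upwards with x hx
    have h1 : 0 < 1 + x := by nlinarith [hx.1]
    have h2 : 0 < 1 + a := by linarith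
    rw [Real.norm_eq_abs, abs_of_pos (inv_pos.2 h1)]
    exact inv_anti₀ h2 (by linarith [hx.1])
  have hmemg : MemLp (fun x : ℝ => x^2) 2 ν := by
    have hsm : AEStronglyMeasurable (fun x : ℝ => x^2) ν :=
      (measurable_id.pow_const 2).aestronglyMeasurable
    refine (memLp_top_of_bound hsm ((|a| + |b|)^2) ?_).mono_exponent le_top
    rw [hν, ae_restrict_iff' measurableSet_Ioc]
    filter_upwards with x hx
    rw [Real.norm_eq_abs]
    have h1 := hx.1; have h2 := hx.2
    have hxa : |x| ≤ |a| + |b| := by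
      rcases abs_cases a with ⟨e,_⟩|⟨e,_⟩ <;> rcases abs_cases b with ⟨f,_⟩|⟨f,_⟩ <;>
        rcases abs_cases x with ⟨g,_⟩|⟨g,_⟩ <;> nlinarith
    rw [abs_of_nonneg (sq_nonneg x)]
    nlinarith [abs_nonneg x, sq_abs x, abs_nonneg a, abs_nonneg b]
  have h22 : Real.HolderConjugate 2 2 := Real.HolderConjugate.two_two
  have hnonnegf : 0 ≤ᵐ[ν] (fun x => (1+x)⁻¹) := by
    rw [hν]
    filter_upwards [ae_restrict_mem measurableSet_Ioc] with x hx
    have h0 : (0:ℝ) < 1 + x := by nlinarith [hx.1]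
    exact le_of_lt (inv_pos.2 h0)
  have hnonnegg : 0 ≤ᵐ[ν] (fun x : ℝ => x^2) := .of_forall fun x => sq_nonneg x
  have hCS := integral_mul_le_Lp_mul_Lq_of_nonneg h22 hnonnegf hnonnegg
    (by norm_num at hmemf ⊢; exact hmemf) (by norm_num at hmemg ⊢; exact hmemg)
  have heq : ∫ x, (1+x)⁻¹ * x^2 ∂ν = ∫ x in Set.Ioc a b, x^2/(1+x) := by
    rw [hν]; exact integral_congr_ae (.of_forall fun x => by ring)
  rw [heq] at hCS
  have e1 : ∀ y : ℝ, y ^ (2:ℝ) = y^2 := fun y => by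
    rw [show (2:ℝ) = ((2:ℕ):ℝ) by norm_num, Real.rpow_natCast]
  simp_rw [e1] at hCS
  refine hCS.trans (le_of_eq ?_)
  rw [Real.sqrt_mul (integral_nonneg fun x => by positivity), Real.sqrt_eq_rpow,
    Real.sqrt_eq_rpow]

theorem intInvSq (a b : ℝ) (ha : -1 < a) (hb : -1 < b) :
    ∫ x in a..b, ((1+x)⁻¹)^2 = (1+a)⁻¹ - (1+b)⁻¹ := by
  have hne : ∀ x ∈ Set.uIcc a b, 1 + x ≠ 0 := by
    intro x hx
    rcases Set.mem_uIcc.1 hx with ⟨h1,_⟩|⟨h1,_⟩ <;> nlinarith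
  have hderiv : ∀ x ∈ Set.uIcc a b, HasDerivAt (fun y => -(1+y)⁻¹) (((1+x)⁻¹)^2) x := by
    intro x hx
    have h0 : (1:ℝ) + x ≠ 0 := hne x hx
    have : HasDerivAt (fun y => (1+y:ℝ)) 1 x := by simpa using (hasDerivAt_id x).const_add 1
    have := (this.inv h0).neg
    refine this.congr_deriv ?_
    field_simp
  have hcont : IntervalIntegrable (fun x => ((1+x)⁻¹)^2) volume a b :=
    (((continuousOn_const.add continuousOn_id).inv₀ hne).pow 2).intervalIntegrable
  rw [intervalIntegral.integral_eq_sub_of_hasDerivAt hderiv hcont]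
  ring

theorem formula (t : ℝ) (ht : -1 < t) :
    ∫ x in (0:ℝ)..t, x^2/(1+x) = t^2/2 - t + Real.log (1+t) := by
  have hne : ∀ x ∈ Set.uIcc 0 t, 1 + x ≠ 0 := by
    intro x hx
    rcases Set.mem_uIcc.1 hx with ⟨h1,_⟩|⟨h1,_⟩ <;> nlinarith
  have hderiv : ∀ x ∈ Set.uIcc 0 t,
      HasDerivAt (fun y => y^2/2 - y + Real.log (1+y)) (x^2/(1+x)) x := by
    intro x hx
    have h0 : (1:ℝ) + x ≠ 0 := hne x hx
    have h1 : HasDerivAt (fun y : ℝ => y^2/2 - y) (x - 1) x := by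
      have := ((hasDerivAt_pow 2 x).div_const 2).sub (hasDerivAt_id x)
      refine this.congr_deriv ?_; ring
    have h2 : HasDerivAt (fun y : ℝ => Real.log (1+y)) ((1+x)⁻¹) x := by
      have hadd : HasDerivAt (fun y => (1+y:ℝ)) 1 x := by
        simpa using (hasDerivAt_id x).const_add 1
      simpa using hadd.log h0
    have := h1.add h2
    refine this.congr_deriv ?_
    field_simp
    ring
  have hcont : IntervalIntegrable (fun x => x^2/(1+x)) volume 0 t :=
    ((continuousOn_id.pow 2).div (continuousOn_const.add continuousOn_id) hne).intervalIntegrable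
  rw [intervalIntegral.integral_eq_sub_of_hasDerivAt hderiv hcont]
  simp

theorem ptwise (t : ℝ) (ht : -1 < t) :
    |∫ x in (0:ℝ)..t, x^2/(1+x)| ≤ Real.sqrt ((1+t)⁻¹) * Real.sqrt (t^6/5) := by
  have h1t : (0:ℝ) < 1 + t := by linarith
  rw [← Real.sqrt_mul (by positivity)]
  rcases le_or_gt 0 t with h | h
  · -- t ≥ 0
    have habs : |∫ x in (0:ℝ)..t, x^2/(1+x)| = ∫ x in Set.Ioc 0 t, x^2/(1+x) := by
      rw [intervalIntegral.integral_of_le h, abs_of_nonneg]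
      refine setIntegral_nonneg measurableSet_Ioc fun x hx => ?_
      have : (0:ℝ) < 1 + x := by nlinarith [hx.1]
      positivity
    rw [habs]
    refine (csIoc 0 t (by norm_num) h).trans (Real.sqrt_le_sqrt (le_of_eq ?_))
    have e1 : ∫ x in Set.Ioc 0 t, ((1+x)⁻¹)^2 = 1 - (1+t)⁻¹ := by
      rw [← intervalIntegral.integral_of_le h, intInvSq 0 t (by norm_num) ht]; norm_num
    have e2 : ∫ x in Set.Ioc 0 t, (x^2)^2 = t^5/5 := by
      rw [← intervalIntegral.integral_of_le h]
      simp_rw [← pow_mul]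
      rw [integral_pow]; norm_num
    rw [e1, e2]
    have hne : (1:ℝ) + t ≠ 0 := ne_of_gt h1t
    field_simp
    ring
  · -- t < 0
    have habs : |∫ x in (0:ℝ)..t, x^2/(1+x)| = ∫ x in Set.Ioc t 0, x^2/(1+x) := by
      rw [intervalIntegral.integral_of_ge h.le, abs_neg, abs_of_nonneg]
      refine setIntegral_nonneg measurableSet_Ioc fun x hx => ?_
      have : (0:ℝ) < 1 + x := by nlinarith [hx.1]
      positivity
    rw [habs]
    refine (csIoc t 0 ht h.le).trans (Real.sqrt_le_sqrt (le_of_eq ?_))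
    have e1 : ∫ x in Set.Ioc t 0, ((1+x)⁻¹)^2 = (1+t)⁻¹ - 1 := by
      rw [← intervalIntegral.integral_of_le h.le, intInvSq t 0 ht (by norm_num)]; norm_num
    have e2 : ∫ x in Set.Ioc t 0, (x^2)^2 = -t^5/5 := by
      rw [← intervalIntegral.integral_of_le h.le]
      simp_rw [← pow_mul]
      rw [integral_pow]; norm_num
    rw [e1, e2]
    have hne : (1:ℝ) + t ≠ 0 := ne_of_gt h1t
    field_simp
    ring


/-- Expected Taylor remainder bound: if `Δ > -1` with integrable `(1+Δ)⁻¹` and `Δ⁶`, then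
`|E[∫₀^Δ x²/(1+x) dx]| ≤ (E[(1+Δ)⁻¹])^{1/2} (E[Δ⁶]/5)^{1/2}`. -/
theorem stmt_4 {Ω : Type*} [MeasurableSpace Ω] (μ : Measure Ω) [IsProbabilityMeasure μ]
    (Δ : Ω → ℝ) (hΔ : ∀ ω, -1 < Δ ω)
    (hinv : Integrable (fun ω => (1 + Δ ω)⁻¹) μ)
    (hΔ6 : Integrable (fun ω => (Δ ω) ^ 6) μ) :
    |∫ ω, (∫ x in (0 : ℝ)..(Δ ω), x ^ 2 / (1 + x)) ∂μ| ≤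
      Real.sqrt (∫ ω, (1 + Δ ω)⁻¹ ∂μ) * Real.sqrt ((∫ ω, (Δ ω) ^ 6 ∂μ) / 5) := by
  have hpos : ∀ ω, (0:ℝ) < 1 + Δ ω := fun ω => by linarith [hΔ ω]
  -- measurability of Δ
  have hΔmeas : AEMeasurable Δ μ := by
    have h1 : AEMeasurable (fun ω => ((1 + Δ ω)⁻¹)⁻¹) μ := hinv.1.aemeasurable.inv
    have h2 : (fun ω => ((1 + Δ ω)⁻¹)⁻¹) = fun ω => 1 + Δ ω := by
      funext ω; exact inv_inv _
    rw [h2] at h1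
    have := h1.sub (aemeasurable_const : AEMeasurable (fun _ : Ω => (1:ℝ)) μ)
    simpa [Pi.sub_def] using this
  set f : Ω → ℝ := fun ω => ∫ x in (0 : ℝ)..(Δ ω), x ^ 2 / (1 + x) with hf
  set g : Ω → ℝ := fun ω => Real.sqrt ((1 + Δ ω)⁻¹) with hg
  set h : Ω → ℝ := fun ω => Real.sqrt ((Δ ω)^6/5) with hh
  have hgsq : ∀ ω, g ω ^ 2 = (1 + Δ ω)⁻¹ := fun ω =>
    Real.sq_sqrt (le_of_lt (inv_pos.2 (hpos ω)))
  have hhsq : ∀ ω, h ω ^ 2 = (Δ ω)^6/5 := fun ω =>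
    Real.sq_sqrt (by positivity)
  have hgm : AEMeasurable g μ := (Real.continuous_sqrt.measurable.comp_aemeasurable
    hinv.1.aemeasurable)
  have hhm : AEMeasurable h μ :=
    Real.continuous_sqrt.measurable.comp_aemeasurable ((hΔ6.1.aemeasurable).div_const 5)
  have hgh : Integrable (fun ω => g ω * h ω) μ := by
    have hbnd : Integrable (fun ω => ((1 + Δ ω)⁻¹ + (Δ ω)^6/5)/2) μ := by
      exact (hinv.add (hΔ6.div_const 5)).div_const 2
    refine Integrable.mono' hbnd (hgm.mul hhm).aestronglyMeasurable ?_
    filter_upwards with ω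
    have h1 := hgsq ω; have h2 := hhsq ω
    have key : g ω * h ω ≤ ((1 + Δ ω)⁻¹ + (Δ ω)^6/5)/2 := by
      nlinarith [sq_nonneg (g ω - h ω)]
    have hnn : 0 ≤ g ω * h ω := mul_nonneg (Real.sqrt_nonneg _) (Real.sqrt_nonneg _)
    calc ‖g ω * h ω‖ = g ω * h ω := by rw [Real.norm_eq_abs, abs_of_nonneg hnn]
      _ ≤ ((1 + Δ ω)⁻¹ + (Δ ω)^6/5)/2 := key
  have hbound : ∀ ω, |f ω| ≤ g ω * h ω := fun ω => ptwise (Δ ω) (hΔ ω)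
  have step1 : |∫ ω, f ω ∂μ| ≤ ∫ ω, |f ω| ∂μ := by
    simpa [Real.norm_eq_abs] using norm_integral_le_integral_norm (μ := μ) f
  have halff : AEMeasurable f μ := by
    have h2 : f = fun ω => (Δ ω)^2/2 - Δ ω + Real.log (1 + Δ ω) := by
      funext ω; exact formula (Δ ω) (hΔ ω)
    rw [h2]
    exact (((hΔmeas.pow_const 2).div_const 2).sub hΔmeas).add
      (Real.measurable_log.comp_aemeasurable (aemeasurable_const.add hΔmeas))
  have step2 : ∫ ω, |f ω| ∂μ ≤ ∫ ω, g ω * h ω ∂μ := by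
    refine integral_mono_of_nonneg (.of_forall fun ω => abs_nonneg _) hgh
      (.of_forall hbound)
  -- Cauchy-Schwarz in expectation
  have h22 : Real.HolderConjugate 2 2 := Real.HolderConjugate.two_two
  have hmemg : MemLp g 2 μ := by
    refine (memLp_two_iff_integrable_sq hgm.aestronglyMeasurable).2 ?_
    have : (fun ω => g ω ^ 2) = fun ω => (1 + Δ ω)⁻¹ := funext hgsq
    rw [this]; exact hinv
  have hmemh : MemLp h 2 μ := by
    refine (memLp_two_iff_integrable_sq hhm.aestronglyMeasurable).2 ?_
    have : (fun ω => h ω ^ 2) = fun ω => (Δ ω)^6/5 := funext hhsq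
    rw [this]; exact hΔ6.div_const 5
  have hCS := integral_mul_le_Lp_mul_Lq_of_nonneg h22
    (.of_forall fun ω => Real.sqrt_nonneg _) (.of_forall fun ω => Real.sqrt_nonneg _)
    (by norm_num at hmemg ⊢; exact hmemg) (by norm_num at hmemh ⊢; exact hmemh)
  have e1 : ∀ y : ℝ, y ^ (2:ℝ) = y^2 := fun y => by
    rw [show (2:ℝ) = ((2:ℕ):ℝ) by norm_num, Real.rpow_natCast]
  simp_rw [e1] at hCS
  have eg : ∫ ω, g ω ^ 2 ∂μ = ∫ ω, (1 + Δ ω)⁻¹ ∂μ := integral_congr_ae (.of_forall hgsq)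
  have eh : ∫ ω, h ω ^ 2 ∂μ = (∫ ω, (Δ ω)^6 ∂μ)/5 := by
    rw [show (fun ω => h ω ^2) = fun ω => (Δ ω)^6/5 from funext hhsq, integral_div]
  rw [eg, eh] at hCS
  calc |∫ ω, f ω ∂μ| ≤ ∫ ω, |f ω| ∂μ := step1
    _ ≤ ∫ ω, g ω * h ω ∂μ := step2
    _ ≤ (∫ ω, (1 + Δ ω)⁻¹ ∂μ) ^ (1/(2:ℝ)) * ((∫ ω, (Δ ω)^6 ∂μ)/5) ^ (1/(2:ℝ)) := hCS
    _ = Real.sqrt (∫ ω, (1 + Δ ω)⁻¹ ∂μ) * Real.sqrt ((∫ ω, (Δ ω) ^ 6 ∂μ) / 5) := by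
        rw [Real.sqrt_eq_rpow, Real.sqrt_eq_rpow]
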